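/- Let x be a spherically symmetric random vector in ℝ^d (d ≥ 2) with finite fourth moments, let u ∈ ℝ^d, and let ε be a real random variable independent of x with mean zero. Set y = ⟨u,x⟩ + ε. Then E[y² x xᵀ] = κ u uᵀ + (Var(ε) + γ ‖u‖²) I_d, where γ = E[⟨x,e₁⟩² ⟨x,e₂⟩²] and κ = E[⟨x,e₁⟩⁴] − γ. -/

import Mathlib

open MeasureTheory

noncomputable def negIso (d : ℕ) (a : Fin d) :
    EuclideanSpace ℝ (Fin d) ≃ₗᵢ[ℝ] EuclideanSpace ℝ (Fin d) :=
  LinearIsometryEquiv.piLpCongrRight 2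
    (fun i => if i = a then LinearIsometryEquiv.neg ℝ else LinearIsometryEquiv.refl ℝ ℝ)

lemma negIso_apply {d : ℕ} (a i : Fin d) (v : EuclideanSpace ℝ (Fin d)) :
    negIso d a v i = if i = a then -v i else v i := by
  simp only [negIso, LinearIsometryEquiv.piLpCongrRight_apply]
  by_cases h : i = a
  · subst h; simp
  · simp [h]

lemma transfer {Ω : Type*} [MeasurableSpace Ω] {μ : Measure Ω} {d : ℕ}
    {x : Ω → EuclideanSpace ℝ (Fin d)} (hx : AEMeasurable x μ)
    (hsym : ∀ Q : EuclideanSpace ℝ (Fin d) ≃ₗᵢ[ℝ] EuclideanSpace ℝ (Fin d),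
      Measure.map (fun ω => Q (x ω)) μ = Measure.map x μ)
    (Q : EuclideanSpace ℝ (Fin d) ≃ₗᵢ[ℝ] EuclideanSpace ℝ (Fin d))
    {f : EuclideanSpace ℝ (Fin d) → ℝ} (hf : Measurable f) :
    ∫ ω, f (Q (x ω)) ∂μ = ∫ ω, f (x ω) ∂μ := by
  have hQx : AEMeasurable (fun ω => Q (x ω)) μ :=
    (Q.toLinearIsometry.continuous.measurable).comp_aemeasurable hx
  rw [← integral_map hQx hf.aestronglyMeasurable, ← integral_map hx hf.aestronglyMeasurable,
    hsym Q]

variable {d : ℕ}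

noncomputable def rotFun (a b : Fin d) (v : EuclideanSpace ℝ (Fin d)) :
    EuclideanSpace ℝ (Fin d) :=
  (WithLp.equiv 2 _).symm fun i =>
    if i = a then (v a + v b) / Real.sqrt 2
    else if i = b then (v a - v b) / Real.sqrt 2 else v i

lemma rotFun_apply (a b : Fin d) (v : EuclideanSpace ℝ (Fin d)) (i : Fin d) :
    rotFun a b v i =
      if i = a then (v a + v b) / Real.sqrt 2
      else if i = b then (v a - v b) / Real.sqrt 2 else v i := rfl

lemma sqrt2_ne : Real.sqrt 2 ≠ 0 := by positivity

lemma rotFun_a (a b : Fin d) (v : EuclideanSpace ℝ (Fin d)) :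
    rotFun a b v a = (v a + v b) / Real.sqrt 2 := by simp [rotFun_apply]

lemma rotFun_b (a b : Fin d) (hab : a ≠ b) (v : EuclideanSpace ℝ (Fin d)) :
    rotFun a b v b = (v a - v b) / Real.sqrt 2 := by
  simp [rotFun_apply, Ne.symm hab]

lemma rotFun_other (a b i : Fin d) (hia : i ≠ a) (hib : i ≠ b)
    (v : EuclideanSpace ℝ (Fin d)) : rotFun a b v i = v i := by
  simp [rotFun_apply, hia, hib]

lemma rotFun_invol (a b : Fin d) (hab : a ≠ b) (v : EuclideanSpace ℝ (Fin d)) :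
    rotFun a b (rotFun a b v) = v := by
  have h2 : Real.sqrt 2 * Real.sqrt 2 = 2 := Real.mul_self_sqrt (by norm_num)
  refine PiLp.ext fun i => ?_
  by_cases hia : i = a
  · rw [hia, rotFun_a a b, rotFun_a a b v, rotFun_b a b hab v]
    field_simp
    rw [Real.sq_sqrt (by norm_num : (0:ℝ) ≤ 2)]; ring
  · by_cases hib : i = b
    · rw [hib, rotFun_b a b hab, rotFun_a a b v, rotFun_b a b hab v]
      field_simp
      rw [Real.sq_sqrt (by norm_num : (0:ℝ) ≤ 2)]; ring
    · rw [rotFun_other a b i hia hib, rotFun_other a b i hia hib]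

noncomputable def rotLin (a b : Fin d) (hab : a ≠ b) :
    EuclideanSpace ℝ (Fin d) ≃ₗ[ℝ] EuclideanSpace ℝ (Fin d) where
  toFun := rotFun a b
  invFun := rotFun a b
  left_inv := rotFun_invol a b hab
  right_inv := rotFun_invol a b hab
  map_add' v w := by
    refine PiLp.ext fun i => ?_
    simp only [rotFun_apply, PiLp.add_apply]
    split_ifs <;> ring
  map_smul' c v := by
    refine PiLp.ext fun i => ?_
    simp only [rotFun_apply, PiLp.smul_apply, RingHom.id_apply, smul_eq_mul]
    split_ifs <;> ring

lemma sum_split (a b : Fin d) (hab : a ≠ b) (f : Fin d → ℝ) :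
    ∑ i, f i = f a + f b + ∑ i ∈ (Finset.univ.erase a).erase b, f i := by
  rw [← Finset.add_sum_erase _ f (Finset.mem_univ a)]
  rw [← Finset.add_sum_erase _ f (Finset.mem_erase.2 ⟨hab.symm, Finset.mem_univ b⟩)]
  ring

noncomputable def rotIso (a b : Fin d) (hab : a ≠ b) :
    EuclideanSpace ℝ (Fin d) ≃ₗᵢ[ℝ] EuclideanSpace ℝ (Fin d) :=
  (rotLin a b hab).isometryOfInner (by
    intro w v
    have h2 : Real.sqrt 2 * Real.sqrt 2 = 2 := Real.mul_self_sqrt (by norm_num)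
    simp only [PiLp.inner_apply, RCLike.inner_apply, conj_trivial]
    show ∑ i, rotFun a b v i * rotFun a b w i = ∑ i, v i * w i
    rw [sum_split a b hab (fun i => rotFun a b v i * rotFun a b w i),
      sum_split a b hab (fun i => v i * w i)]
    have e1 : rotFun a b v a * rotFun a b w a + rotFun a b v b * rotFun a b w b
        = v a * w a + v b * w b := by
      rw [rotFun_a, rotFun_a, rotFun_b a b hab, rotFun_b a b hab,
        div_mul_div_comm, div_mul_div_comm, h2]
      ring
    rw [e1]
    congr 1
    apply Finset.sum_congr rfl
    intro i hi
    simp only [Finset.mem_erase] at hi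
    rw [rotFun_other a b i hi.2.1 hi.1, rotFun_other a b i hi.2.1 hi.1])

lemma rotIso_apply (a b : Fin d) (hab : a ≠ b) (v : EuclideanSpace ℝ (Fin d)) (i : Fin d) :
    rotIso a b hab v i = rotFun a b v i := rfl


/-- Fourth-moment identity of the Method of Moments: for a spherically
symmetric, isotropic random vector `x` and independent centered noise `ε`,
with `y = ⟨u,x⟩ + ε`, one has
`E[y² x xᵀ] = κ u uᵀ + (Var(ε) + γ‖u‖²) I_d`. -/
theorem moment_identity {Ω : Type*} [MeasurableSpace Ω]
    (μ : Measure Ω) [IsProbabilityMeasure μ] {d : ℕ} (hd : 2 ≤ d)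
    (x : Ω → EuclideanSpace ℝ (Fin d)) (ε : Ω → ℝ)
    (u : EuclideanSpace ℝ (Fin d))
    (hx : AEMeasurable x μ) (hε : MemLp ε 2 μ)
    (hmom : Integrable (fun ω => ‖x ω‖ ^ 4) μ)
    (hsym : ∀ Q : EuclideanSpace ℝ (Fin d) ≃ₗᵢ[ℝ] EuclideanSpace ℝ (Fin d),
      Measure.map (fun ω => Q (x ω)) μ = Measure.map x μ)
    (hindep : ProbabilityTheory.IndepFun x ε μ)
    (hmean : ∫ ω, ε ω ∂μ = 0)
    (hiso : ∀ i : Fin d, ∫ ω, (x ω i) ^ 2 ∂μ = 1)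
    (γ κ : ℝ)
    (hγ : γ = ∫ ω, (x ω ⟨0, by omega⟩) ^ 2 * (x ω ⟨1, by omega⟩) ^ 2 ∂μ)
    (hκ : κ = (∫ ω, (x ω ⟨0, by omega⟩) ^ 4 ∂μ) - γ)
    (y : Ω → ℝ) (hy : ∀ ω, y ω = (inner ℝ u (x ω) : ℝ) + ε ω) :
    (Matrix.of fun i j : Fin d => ∫ ω, (y ω) ^ 2 * (x ω i) * (x ω j) ∂μ)
      = κ • (Matrix.of fun i j : Fin d => u i * u j)
        + (ProbabilityTheory.variance ε μ + γ * ‖u‖ ^ 2) • (1 : Matrix (Fin d) (Fin d) ℝ) := by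
  have h0d : 0 < d := by omega
  have h1d : 1 < d := by omega
  set e0 : Fin d := ⟨0, h0d⟩ with he0
  set e1 : Fin d := ⟨1, h1d⟩ with he1
  have he01 : e0 ≠ e1 := by simp [he0, he1, Fin.ext_iff]
  -- measurability of coordinates
  have hXi : ∀ i : Fin d, AEMeasurable (fun ω => x ω i) μ :=
    fun i => (((measurable_pi_apply i).comp (WithLp.measurable_ofLp 2 _))).comp_aemeasurable hx
  have hmf4 : ∀ k l i j : Fin d,
      Measurable fun v : EuclideanSpace ℝ (Fin d) => v k * v l * v i * v j :=
    fun k l i j => (((((measurable_pi_apply k).comp (WithLp.measurable_ofLp 2 _))).mul (((measurable_pi_apply l).comp (WithLp.measurable_ofLp 2 _)))).mul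
      (((measurable_pi_apply i).comp (WithLp.measurable_ofLp 2 _)))).mul (((measurable_pi_apply j).comp (WithLp.measurable_ofLp 2 _)))
  have hmf2 : ∀ i j : Fin d, Measurable fun v : EuclideanSpace ℝ (Fin d) => v i * v j :=
    fun i j => (((measurable_pi_apply i).comp (WithLp.measurable_ofLp 2 _))).mul (((measurable_pi_apply j).comp (WithLp.measurable_ofLp 2 _)))
  -- coordinate bound
  have hcb : ∀ (v : EuclideanSpace ℝ (Fin d)) (i : Fin d), |v i| ≤ ‖v‖ := by
    intro v i
    rw [EuclideanSpace.norm_eq, ← Real.sqrt_sq_eq_abs]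
    apply Real.sqrt_le_sqrt
    have h : v i ^ 2 = ‖v i‖ ^ 2 := by simp [sq_abs]
    rw [h]
    exact Finset.single_le_sum (f := fun j => ‖v j‖ ^ 2) (fun j _ => by positivity)
      (Finset.mem_univ i)
  -- integrability of quartic products
  have hI4 : ∀ k l i j : Fin d, Integrable (fun ω => x ω k * x ω l * x ω i * x ω j) μ := by
    intro k l i j
    refine Integrable.mono hmom ((hmf4 k l i j).comp_aemeasurable hx).aestronglyMeasurable
      (ae_of_all _ fun ω => ?_)
    have hn : (0:ℝ) ≤ ‖x ω‖ := norm_nonneg _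
    have h1 := hcb (x ω) k
    have h2 := hcb (x ω) l
    have h3 := hcb (x ω) i
    have h4 := hcb (x ω) j
    rw [Real.norm_eq_abs, Real.norm_eq_abs, abs_of_nonneg (by positivity : (0:ℝ) ≤ ‖x ω‖^4)]
    calc |x ω k * x ω l * x ω i * x ω j| = |x ω k| * |x ω l| * |x ω i| * |x ω j| := by
          rw [abs_mul, abs_mul, abs_mul]
      _ ≤ ‖x ω‖ * ‖x ω‖ * ‖x ω‖ * ‖x ω‖ := by
          apply mul_le_mul _ h4 (abs_nonneg _) (by positivity)
          apply mul_le_mul _ h3 (abs_nonneg _) (by positivity)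
          exact mul_le_mul h1 h2 (abs_nonneg _) hn
      _ = ‖x ω‖ ^ 4 := by ring
  have hIc : Integrable (fun ω => 1 + ‖x ω‖ ^ 4) μ := (integrable_const 1).add hmom
  have hpow_le : ∀ t : ℝ, 0 ≤ t → ∀ n : ℕ, n ≤ 4 → t ^ n ≤ 1 + t ^ 4 := by
    intro t ht n hn
    rcases le_or_gt t 1 with h | h
    · calc t ^ n ≤ 1 := pow_le_one₀ ht h
        _ ≤ 1 + t ^ 4 := by linarith [pow_nonneg ht 4]
    · calc t ^ n ≤ t ^ 4 := pow_le_pow_right₀ h.le hn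
        _ ≤ 1 + t ^ 4 := by linarith
  have hI2 : ∀ i j : Fin d, Integrable (fun ω => x ω i * x ω j) μ := by
    intro i j
    refine Integrable.mono hIc ((hmf2 i j).comp_aemeasurable hx).aestronglyMeasurable
      (ae_of_all _ fun ω => ?_)
    have h1 := hcb (x ω) i
    have h2 := hcb (x ω) j
    have hn : (0:ℝ) ≤ ‖x ω‖ := norm_nonneg _
    rw [Real.norm_eq_abs, Real.norm_eq_abs, abs_of_nonneg (by positivity : (0:ℝ) ≤ 1 + ‖x ω‖^4)]
    calc |x ω i * x ω j| = |x ω i| * |x ω j| := abs_mul _ _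
      _ ≤ ‖x ω‖ * ‖x ω‖ := mul_le_mul h1 h2 (abs_nonneg _) hn
      _ = ‖x ω‖ ^ 2 := by ring
      _ ≤ 1 + ‖x ω‖ ^ 4 := hpow_le _ hn 2 (by norm_num)
  have hminner : Measurable fun v : EuclideanSpace ℝ (Fin d) => (inner ℝ u v : ℝ) :=
    (Continuous.inner continuous_const continuous_id).measurable
  have hinner_le : ∀ v : EuclideanSpace ℝ (Fin d), |(inner ℝ u v : ℝ)| ≤ ‖u‖ * ‖v‖ :=
    fun v => abs_real_inner_le_norm u v
  have hI3 : ∀ i j : Fin d,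
      Integrable (fun ω => (inner ℝ u (x ω) : ℝ) * x ω i * x ω j) μ := by
    intro i j
    refine Integrable.mono (hIc.const_mul ‖u‖)
      (((hminner.mul (hmf2 i j)).comp_aemeasurable hx).congr ?_).aestronglyMeasurable
      (ae_of_all _ fun ω => ?_)
    · exact ae_of_all _ fun ω => by simp [mul_assoc]
    have h1 := hcb (x ω) i
    have h2 := hcb (x ω) j
    have hn : (0:ℝ) ≤ ‖x ω‖ := norm_nonneg _
    have hun : (0:ℝ) ≤ ‖u‖ := norm_nonneg _
    rw [Real.norm_eq_abs, Real.norm_eq_abs,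
      abs_of_nonneg (by positivity : (0:ℝ) ≤ ‖u‖ * (1 + ‖x ω‖^4))]
    calc |(inner ℝ u (x ω) : ℝ) * x ω i * x ω j|
        = |(inner ℝ u (x ω) : ℝ)| * |x ω i| * |x ω j| := by rw [abs_mul, abs_mul]
      _ ≤ (‖u‖ * ‖x ω‖) * ‖x ω‖ * ‖x ω‖ := by
          apply mul_le_mul _ h2 (abs_nonneg _) (by positivity)
          exact mul_le_mul (hinner_le (x ω)) h1 (abs_nonneg _) (by positivity)
      _ = ‖u‖ * ‖x ω‖ ^ 3 := by ring
      _ ≤ ‖u‖ * (1 + ‖x ω‖ ^ 4) := by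
          apply mul_le_mul_of_nonneg_left (hpow_le _ hn 3 (by norm_num)) hun
  have hIA : ∀ i j : Fin d,
      Integrable (fun ω => (inner ℝ u (x ω) : ℝ) ^ 2 * x ω i * x ω j) μ := by
    intro i j
    refine Integrable.mono (hIc.const_mul (‖u‖^2))
      ((((hminner.pow_const 2).mul (hmf2 i j)).comp_aemeasurable hx).congr ?_).aestronglyMeasurable
      (ae_of_all _ fun ω => ?_)
    · exact ae_of_all _ fun ω => by simp [mul_assoc]
    have h1 := hcb (x ω) i
    have h2 := hcb (x ω) j
    have hn : (0:ℝ) ≤ ‖x ω‖ := norm_nonneg _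
    have hun : (0:ℝ) ≤ ‖u‖ := norm_nonneg _
    rw [Real.norm_eq_abs, Real.norm_eq_abs,
      abs_of_nonneg (by positivity : (0:ℝ) ≤ ‖u‖^2 * (1 + ‖x ω‖^4))]
    calc |(inner ℝ u (x ω) : ℝ) ^ 2 * x ω i * x ω j|
        = |(inner ℝ u (x ω) : ℝ)| ^ 2 * |x ω i| * |x ω j| := by
          rw [abs_mul, abs_mul, abs_pow]
      _ ≤ (‖u‖ * ‖x ω‖) ^ 2 * ‖x ω‖ * ‖x ω‖ := by
          apply mul_le_mul _ h2 (abs_nonneg _) (by positivity)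
          apply mul_le_mul _ h1 (abs_nonneg _) (by positivity)
          exact pow_le_pow_left₀ (abs_nonneg _) (hinner_le (x ω)) 2
      _ = ‖u‖ ^ 2 * ‖x ω‖ ^ 4 := by ring
      _ ≤ ‖u‖ ^ 2 * (1 + ‖x ω‖ ^ 4) := by
          apply mul_le_mul_of_nonneg_left (by linarith) (by positivity)
  -- the odd-symmetry vanishing principle
  have hodd : ∀ (f : EuclideanSpace ℝ (Fin d) → ℝ), Measurable f →
      ∀ (Q : EuclideanSpace ℝ (Fin d) ≃ₗᵢ[ℝ] EuclideanSpace ℝ (Fin d)),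
      (∀ v, f (Q v) = - f v) → ∫ ω, f (x ω) ∂μ = 0 := by
    intro f hf Q hQ
    have h1 := transfer hx hsym Q hf
    have h2 : ∫ ω, f (Q (x ω)) ∂μ = - ∫ ω, f (x ω) ∂μ := by
      simp_rw [hQ]
      exact integral_neg _
    rw [h2] at h1
    linarith
  have hvan4 : ∀ a k l i j : Fin d,
      ((if k = a then (-1:ℝ) else 1) * (if l = a then (-1:ℝ) else 1) *
        (if i = a then (-1:ℝ) else 1) * (if j = a then (-1:ℝ) else 1)) = -1 →
      ∫ ω, x ω k * x ω l * x ω i * x ω j ∂μ = 0 := by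
    intro a k l i j hsgn
    refine hodd (fun v => v k * v l * v i * v j) (hmf4 k l i j) (negIso d a) fun v => ?_
    have hcomp : ∀ m : Fin d, negIso d a v m = (if m = a then (-1:ℝ) else 1) * v m := by
      intro m
      rw [negIso_apply]
      split_ifs <;> ring
    simp only [hcomp]
    linear_combination (v k * v l * v i * v j) * hsgn
  -- second moments
  have hM2 : ∀ i j : Fin d, ∫ ω, x ω i * x ω j ∂μ = if i = j then 1 else 0 := by
    intro i j
    by_cases h : i = j
    · subst h
      rw [if_pos rfl, show (fun ω => x ω i * x ω i) = fun ω => x ω i ^ 2 from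
        funext fun ω => (sq _).symm]
      exact hiso i
    · rw [if_neg h]
      refine hodd (fun v => v i * v j) (hmf2 i j) (negIso d i) fun v => ?_
      show negIso d i v i * negIso d i v j = -(v i * v j)
      rw [negIso_apply, negIso_apply, if_pos rfl, if_neg (Ne.symm h)]
      ring
  -- permutation transfer
  have hQap : ∀ (e : Equiv.Perm (Fin d)) (v : EuclideanSpace ℝ (Fin d)) (i : Fin d),
      (LinearIsometryEquiv.piLpCongrLeft 2 ℝ ℝ e) v i = v (e.symm i) := fun e v i => rfl
  have hm4' : ∀ i : Fin d,
      ∫ ω, x ω i * x ω i * x ω i * x ω i ∂μ = ∫ ω, x ω e0 * x ω e0 * x ω e0 * x ω e0 ∂μ := by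
    intro i
    have h := transfer hx hsym (LinearIsometryEquiv.piLpCongrLeft 2 ℝ ℝ (Equiv.swap e0 i))
      (hmf4 i i i i)
    simp only [hQap] at h
    rw [show (Equiv.swap e0 i).symm i = e0 by
      rw [Equiv.symm_apply_eq, Equiv.swap_apply_left]] at h
    exact h.symm
  have hγ2 : ∀ i j : Fin d, i ≠ j →
      ∫ ω, x ω i * x ω i * x ω j * x ω j ∂μ = ∫ ω, x ω e0 * x ω e0 * x ω e1 * x ω e1 ∂μ := by
    intro i j hij
    obtain ⟨e, he0', he1'⟩ : ∃ e : Equiv.Perm (Fin d), e e0 = i ∧ e e1 = j := by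
      refine ⟨Equiv.swap e0 i * Equiv.swap e1 (Equiv.swap e0 i j), ?_, ?_⟩
      · have h1 : Equiv.swap e0 i j ≠ e0 := by
          intro hc
          have h2 := congrArg (Equiv.swap e0 i) hc
          rw [Equiv.swap_apply_self, Equiv.swap_apply_left] at h2
          exact hij h2.symm
        simp only [Equiv.Perm.mul_apply]
        rw [Equiv.swap_apply_of_ne_of_ne he01 (Ne.symm h1), Equiv.swap_apply_left]
      · simp only [Equiv.Perm.mul_apply]
        rw [Equiv.swap_apply_left, Equiv.swap_apply_self]
    have h := transfer hx hsym (LinearIsometryEquiv.piLpCongrLeft 2 ℝ ℝ e) (hmf4 i i j j)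
    simp only [hQap] at h
    rw [show e.symm i = e0 by rw [Equiv.symm_apply_eq, he0'],
      show e.symm j = e1 by rw [Equiv.symm_apply_eq, he1']] at h
    exact h.symm
  -- abbreviations
  set m4 : ℝ := ∫ ω, x ω e0 * x ω e0 * x ω e0 * x ω e0 ∂μ with hm4def
  have hγp : γ = ∫ ω, x ω e0 * x ω e0 * x ω e1 * x ω e1 ∂μ := by
    rw [hγ]
    congr 1
    funext ω
    ring
  have hκp : κ = m4 - γ := by
    rw [hκ, hm4def]
    congr 2
    funext ω
    ring
  -- the rotation identity m4 = 3γ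
  have hrot : m4 = 3 * γ := by
    have hf : Measurable fun v : EuclideanSpace ℝ (Fin d) => v e0 * v e0 * v e0 * v e0 :=
      hmf4 e0 e0 e0 e0
    have h := transfer hx hsym (rotIso e0 e1 he01) hf
    have hsq : Real.sqrt 2 * Real.sqrt 2 = 2 := Real.mul_self_sqrt (by norm_num)
    have hs4 : Real.sqrt 2 ^ 4 = 4 := by
      have h44 : Real.sqrt 2 ^ 4 = (Real.sqrt 2 ^ 2) ^ 2 := by ring
      rw [h44, Real.sq_sqrt (by norm_num : (0:ℝ) ≤ 2)]
      norm_num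
    have hquart : ∀ c : ℝ, c / Real.sqrt 2 * (c / Real.sqrt 2) * (c / Real.sqrt 2) *
        (c / Real.sqrt 2) = c ^ 4 / 4 := by
      intro c
      field_simp
      linear_combination (-c ^ 4) * hs4
    have hrw : (fun ω => rotIso e0 e1 he01 (x ω) e0 * rotIso e0 e1 he01 (x ω) e0 *
        rotIso e0 e1 he01 (x ω) e0 * rotIso e0 e1 he01 (x ω) e0)
        = fun ω => (1/4) * (x ω e0 * x ω e0 * x ω e0 * x ω e0)
          + (x ω e0 * x ω e0 * x ω e0 * x ω e1)
          + (3/2) * (x ω e0 * x ω e0 * x ω e1 * x ω e1)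
          + (x ω e0 * x ω e1 * x ω e1 * x ω e1)
          + (1/4) * (x ω e1 * x ω e1 * x ω e1 * x ω e1) := by
      funext ω
      rw [rotIso_apply, rotFun_a, hquart]
      ring
    rw [hrw] at h
    rw [integral_add, integral_add, integral_add, integral_add,
      integral_const_mul, integral_const_mul, integral_const_mul] at h
    rotate_left
    all_goals try
      (repeat' apply Integrable.add) <;>
        first
          | exact (hI4 _ _ _ _).const_mul _
          | exact hI4 _ _ _ _
    have hz1 : ∫ ω, x ω e0 * x ω e0 * x ω e0 * x ω e1 ∂μ = 0 := by
      apply hvan4 e1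
      simp [he01, Ne.symm he01]
    have hz2 : ∫ ω, x ω e0 * x ω e1 * x ω e1 * x ω e1 ∂μ = 0 := by
      apply hvan4 e0
      simp [he01, Ne.symm he01]
    rw [hz1, hz2, ← hγp, hm4' e1] at h
    linarith
  have hκ2 : κ = 2 * γ := by rw [hκp, hrot]; ring
  -- full fourth-moment table
  have hM : ∀ k l i j : Fin d, ∫ ω, x ω k * x ω l * x ω i * x ω j ∂μ =
      if k = l ∧ i = j ∧ k = i then m4
      else if k = l ∧ i = j then γ
      else if k = i ∧ l = j then γ
      else if k = j ∧ l = i then γ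
      else 0 := by
    intro k l i j
    by_cases hkl : k = l
    · by_cases hij : i = j
      · by_cases hki : k = i
        · subst hkl; subst hij; subst hki
          rw [if_pos ⟨rfl, rfl, rfl⟩, hm4', hm4def]
        · subst hkl; subst hij
          rw [if_neg (fun hc => hki hc.2.2), if_pos ⟨rfl, rfl⟩, hγ2 k i hki, hγp]
      · -- k = l, i ≠ j : some index among i, j occurs an odd number of times
        subst hkl
        rw [if_neg (fun hc => hij hc.2.1), if_neg (fun hc => hij hc.2),
          if_neg (fun hc => hij (hc.1.symm.trans hc.2)),
          if_neg (fun hc => hij (hc.2.symm.trans hc.1))]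
        by_cases hik : i = k
        · apply hvan4 j
          have hj1 : ¬ k = j := fun hc => hij (hik.trans hc)
          have hj2 : ¬ i = j := hij
          simp [hj1, hj2]
        · apply hvan4 i
          have h1 : ¬ k = i := fun hc => hik hc.symm
          have h2 : ¬ j = i := fun hc => hij hc.symm
          simp [h1, h2]
    · -- k ≠ l
      rw [if_neg (fun hc => hkl hc.1), if_neg (fun hc => hkl hc.1)]
      by_cases hki : k = i
      · by_cases hlj : l = j
        · rw [if_pos ⟨hki, hlj⟩]
          subst hki; subst hlj
          trans (∫ ω, x ω k * x ω k * x ω l * x ω l ∂μ)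
          · congr 1; funext ω; ring
          · rw [hγ2 k l hkl]; exact hγp.symm
        · rw [if_neg (fun hc => hlj hc.2),
            if_neg (fun hc : k = j ∧ l = i => hkl (hc.2.trans hki.symm).symm)]
          apply hvan4 l
          have h1 : ¬ k = l := hkl
          have h2 : ¬ i = l := fun hc => hkl (hki.trans hc)
          have h3 : ¬ j = l := fun hc => hlj hc.symm
          simp [h1, h2, h3]
      · by_cases hkj : k = j
        · by_cases hli : l = i
          · rw [if_neg (fun hc => hki hc.1), if_pos ⟨hkj, hli⟩]
            subst hkj; subst hli
            trans (∫ ω, x ω k * x ω k * x ω l * x ω l ∂μ)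
            · congr 1; funext ω; ring
            · rw [hγ2 k l hkl]; exact hγp.symm
          · rw [if_neg (fun hc => hki hc.1), if_neg (fun hc => hli hc.2)]
            apply hvan4 l
            have h1 : ¬ k = l := hkl
            have h2 : ¬ i = l := fun hc => hli hc.symm
            have h3 : ¬ j = l := fun hc => hkl (hkj.trans hc)
            simp [h1, h2, h3]
        · rw [if_neg (fun hc => hki hc.1), if_neg (fun hc => hkj hc.1)]
          apply hvan4 k
          have h1 : ¬ l = k := fun hc => hkl hc.symm
          have h2 : ¬ i = k := fun hc => hki hc.symm
          have h3 : ¬ j = k := fun hc => hkj hc.symm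
          simp [h1, h2, h3]
  -- expansion of the signal term
  have hA : ∀ i j : Fin d, ∫ ω, (inner ℝ u (x ω) : ℝ) ^ 2 * x ω i * x ω j ∂μ
      = ∑ k, ∑ l, u k * u l * ∫ ω, x ω k * x ω l * x ω i * x ω j ∂μ := by
    intro i j
    have hexp : (fun ω => (inner ℝ u (x ω) : ℝ) ^ 2 * x ω i * x ω j)
        = fun ω => ∑ k, ∑ l, u k * u l * (x ω k * x ω l * x ω i * x ω j) := by
      funext ω
      have hin : (inner ℝ u (x ω) : ℝ) = ∑ k, u k * x ω k := by
        simp [PiLp.inner_apply, mul_comm]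
      rw [hin, sq, Finset.sum_mul_sum, Finset.sum_mul, Finset.sum_mul]
      refine Finset.sum_congr rfl fun k _ => ?_
      rw [Finset.sum_mul, Finset.sum_mul]
      exact Finset.sum_congr rfl fun l _ => by ring
    rw [hexp, integral_finset_sum _ fun k _ =>
      integrable_finset_sum _ fun l _ => (hI4 k l i j).const_mul _]
    refine Finset.sum_congr rfl fun k _ => ?_
    rw [integral_finset_sum _ fun l _ => (hI4 k l i j).const_mul _]
    exact Finset.sum_congr rfl fun l _ => integral_const_mul _ _
  have hnorm : ∑ k, u k * u k = ‖u‖ ^ 2 := by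
    rw [EuclideanSpace.norm_eq, Real.sq_sqrt (by positivity)]
    exact Finset.sum_congr rfl fun i _ => by rw [Real.norm_eq_abs, sq_abs, sq]
  -- diagonal evaluation
  have hAdiag : ∀ i : Fin d,
      (∑ k, ∑ l, u k * u l * ∫ ω, x ω k * x ω l * x ω i * x ω i ∂μ)
        = κ * (u i * u i) + γ * ‖u‖ ^ 2 := by
    intro i
    have hinner2 : ∀ k : Fin d,
        (∑ l, u k * u l * ∫ ω, x ω k * x ω l * x ω i * x ω i ∂μ)
          = u k * u k * (if k = i then m4 else γ) := by
      intro k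
      rw [Finset.sum_eq_single k]
      · rw [hM k k i i]
        by_cases hki : k = i
        · subst hki; rw [if_pos ⟨rfl, rfl, rfl⟩, if_pos rfl]
        · rw [if_neg (fun hc => hki hc.2.2), if_pos ⟨rfl, rfl⟩, if_neg hki]
      · intro l _ hlk
        have h1 : ¬(k = l) := fun hc => hlk hc.symm
        rw [hM k l i i, if_neg (fun hc => h1 hc.1), if_neg (fun hc => h1 hc.1),
          if_neg (fun hc => h1 (hc.1.trans hc.2.symm)),
          if_neg (fun hc => h1 (hc.1.trans hc.2.symm))]
        ring
      · intro hk; exact absurd (Finset.mem_univ k) hk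
    calc (∑ k, ∑ l, u k * u l * ∫ ω, x ω k * x ω l * x ω i * x ω i ∂μ)
        = ∑ k, u k * u k * (if k = i then m4 else γ) :=
          Finset.sum_congr rfl fun k _ => hinner2 k
      _ = ∑ k, ((if k = i then (m4 - γ) * (u k * u k) else 0) + γ * (u k * u k)) :=
          Finset.sum_congr rfl fun k _ => by split_ifs <;> ring
      _ = (m4 - γ) * (u i * u i) + γ * ‖u‖ ^ 2 := by
          rw [Finset.sum_add_distrib,
            Finset.sum_ite_eq' Finset.univ i (fun k => (m4 - γ) * (u k * u k)),
            if_pos (Finset.mem_univ i), ← Finset.mul_sum, hnorm]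
      _ = κ * (u i * u i) + γ * ‖u‖ ^ 2 := by rw [hκp]
  -- off-diagonal evaluation
  have hAoff : ∀ i j : Fin d, i ≠ j →
      (∑ k, ∑ l, u k * u l * ∫ ω, x ω k * x ω l * x ω i * x ω j ∂μ)
        = κ * (u i * u j) := by
    intro i j hij
    have hterm : ∀ k l : Fin d, u k * u l * ∫ ω, x ω k * x ω l * x ω i * x ω j ∂μ
        = (if k = i ∧ l = j then γ * (u i * u j) else 0)
          + (if k = j ∧ l = i then γ * (u i * u j) else 0) := by
      intro k l
      rw [hM k l i j, if_neg (fun hc => hij hc.2.1), if_neg (fun hc => hij hc.2)]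
      by_cases h1 : k = i ∧ l = j
      · have h2 : ¬(k = j ∧ l = i) := fun hc => hij (h1.1.symm.trans hc.1)
        rw [if_pos h1, if_pos h1, if_neg h2, h1.1, h1.2]
        ring
      · by_cases h2 : k = j ∧ l = i
        · rw [if_neg h1, if_pos h2, if_neg h1, if_pos h2, h2.1, h2.2]
          ring
        · rw [if_neg h1, if_neg h2, if_neg h1, if_neg h2]
          ring
    have hs1 : (∑ k, ∑ l, (if k = i ∧ l = j then γ * (u i * u j) else 0))
        = γ * (u i * u j) := by
      rw [Finset.sum_eq_single i]
      · rw [Finset.sum_eq_single j]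
        · simp
        · intro l _ hl; simp [hl]
        · intro h; exact absurd (Finset.mem_univ j) h
      · intro k _ hk
        exact Finset.sum_eq_zero fun l _ => by simp [hk]
      · intro h; exact absurd (Finset.mem_univ i) h
    have hs2 : (∑ k, ∑ l, (if k = j ∧ l = i then γ * (u i * u j) else 0))
        = γ * (u i * u j) := by
      rw [Finset.sum_eq_single j]
      · rw [Finset.sum_eq_single i]
        · simp
        · intro l _ hl; simp [hl]
        · intro h; exact absurd (Finset.mem_univ i) h
      · intro k _ hk
        exact Finset.sum_eq_zero fun l _ => by simp [hk]
      · intro h; exact absurd (Finset.mem_univ j) h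
    calc (∑ k, ∑ l, u k * u l * ∫ ω, x ω k * x ω l * x ω i * x ω j ∂μ)
        = ∑ k, ∑ l, ((if k = i ∧ l = j then γ * (u i * u j) else 0)
            + (if k = j ∧ l = i then γ * (u i * u j) else 0)) :=
          Finset.sum_congr rfl fun k _ => Finset.sum_congr rfl fun l _ => hterm k l
      _ = ∑ k, ((∑ l, (if k = i ∧ l = j then γ * (u i * u j) else 0))
            + ∑ l, (if k = j ∧ l = i then γ * (u i * u j) else 0)) :=
          Finset.sum_congr rfl fun k _ => Finset.sum_add_distrib
      _ = γ * (u i * u j) + γ * (u i * u j) := by rw [Finset.sum_add_distrib, hs1, hs2]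
      _ = κ * (u i * u j) := by rw [hκ2]; ring
  -- noise terms
  have hεm : AEStronglyMeasurable ε μ := hε.aestronglyMeasurable
  have hεint : Integrable ε μ := hε.integrable one_le_two
  have hε2int : Integrable (fun ω => ε ω ^ 2) μ := hε.integrable_sq
  have hindep1 : ∀ i j : Fin d, ProbabilityTheory.IndepFun ε
      (fun ω => (inner ℝ u (x ω) : ℝ) * x ω i * x ω j) μ :=
    fun i j => hindep.symm.comp measurable_id
      ((hminner.mul (((measurable_pi_apply i).comp (WithLp.measurable_ofLp 2 _)))).mul (((measurable_pi_apply j).comp (WithLp.measurable_ofLp 2 _))))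
  have hindep2 : ∀ i j : Fin d, ProbabilityTheory.IndepFun (fun ω => ε ω ^ 2)
      (fun ω => x ω i * x ω j) μ :=
    fun i j => hindep.symm.comp (measurable_id.pow_const 2) (hmf2 i j)
  have hIB : ∀ i j : Fin d,
      Integrable (fun ω => ε ω * ((inner ℝ u (x ω) : ℝ) * x ω i * x ω j)) μ :=
    fun i j => (hindep1 i j).integrable_mul hεint (hI3 i j)
  have hIC : ∀ i j : Fin d, Integrable (fun ω => ε ω ^ 2 * (x ω i * x ω j)) μ :=
    fun i j => (hindep2 i j).integrable_mul hε2int (hI2 i j)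
  have hB0 : ∀ i j : Fin d,
      ∫ ω, ε ω * ((inner ℝ u (x ω) : ℝ) * x ω i * x ω j) ∂μ = 0 := by
    intro i j
    rw [ProbabilityTheory.IndepFun.integral_fun_mul_eq_mul_integral (hindep1 i j) hεm
      (hI3 i j).aestronglyMeasurable, hmean, zero_mul]
  have hC : ∀ i j : Fin d, ∫ ω, ε ω ^ 2 * (x ω i * x ω j) ∂μ
      = (∫ ω, ε ω ^ 2 ∂μ) * (if i = j then 1 else 0) := by
    intro i j
    rw [ProbabilityTheory.IndepFun.integral_fun_mul_eq_mul_integral (hindep2 i j)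
      hε2int.aestronglyMeasurable (hI2 i j).aestronglyMeasurable, hM2 i j]
  have hVar : ProbabilityTheory.variance ε μ = ∫ ω, ε ω ^ 2 ∂μ := by
    rw [ProbabilityTheory.variance_eq_sub hε]
    simp only [Pi.pow_apply]
    rw [hmean]
    ring
  -- assembling the matrix identity
  ext i j
  rw [Matrix.add_apply, Matrix.smul_apply, Matrix.smul_apply, Matrix.of_apply,
    Matrix.of_apply, Matrix.one_apply, smul_eq_mul, smul_eq_mul]
  have hsplit : (fun ω => y ω ^ 2 * x ω i * x ω j) = fun ω =>
      ((inner ℝ u (x ω) : ℝ) ^ 2 * x ω i * x ω j)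
        + (2 * (ε ω * ((inner ℝ u (x ω) : ℝ) * x ω i * x ω j))
          + ε ω ^ 2 * (x ω i * x ω j)) := by
    funext ω
    rw [hy ω]
    ring
  rw [hsplit, integral_add, integral_add, integral_const_mul, hB0 i j,
    hC i j, hA i j, hVar]
  rotate_left
  all_goals try
    (repeat' apply Integrable.add) <;>
      first
        | exact hIA i j
        | exact (hIB i j).const_mul 2
        | exact hIC i j
  by_cases hij : i = j
  · subst hij
    rw [if_pos rfl, hAdiag i]
    ring
  · rw [if_neg hij, hAoff i j hij]
    ring
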